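/- Drift bound (Lemma on expected change): for every ε > 0 there exists N such that for all n ≥ N, every graph X on [n], every edge e of K_n, and every graph G on |V| ≤ L vertices with |E| ≥ 2 edges, one step of the Glauber dynamics from X satisfies E[(N_G(X(1),e) − N_G(X,e))/n^{|V|−2}] ≤ (2/C(n,2))·|E|·(|E|−1)·[ −r_G(X,e)^{|E|−1} + φ(r̄(X))·r̄(X)^{|E|−2} ] + ε/n². -/

import Mathlib

open Finset

open scoped Classical

noncomputable section

/-- The set of edges of the complete graph `K_n` on vertex set `[n] = Fin n`:
unordered pairs of distinct vertices. -/
abbrev EdgeK (n : ℕ) : Type := {e : Sym2 (Fin n) // ¬ e.IsDiag}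

/-- A graph on `[n]`, identified with an element `X ∈ {0,1}^{E(K_n)}`. -/
abbrev Config (n : ℕ) : Type := EdgeK n → Bool

/-- The image of an edge under an injection of vertex sets. -/
def mapEdge {m n : ℕ} (v : Fin m ↪ Fin n) (a : EdgeK m) : EdgeK n :=
  ⟨a.1.map v, fun h => a.2 ((Sym2.isDiag_map v.injective).mp h)⟩

/-- The complete graph `K_n` as a configuration. -/
def fullConfig (n : ℕ) : Config n := fun _ => true

/-- `X ∪ {e}`. -/
def addEdge {n : ℕ} (X : Config n) (e : EdgeK n) : Config n :=
  fun f => if f = e then true else X f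

/-- `X_{e+}` (for `b = true`), resp. `X_{e-}` (for `b = false`). -/
def setEdge {n : ℕ} (X : Config n) (e : EdgeK n) (b : Bool) : Config n :=
  fun f => if f = e then b else X f

/-- `N_G(X)`: the number of tuples of `m` distinct vertices of `[n]` such that every
edge of the pattern graph `G` (a graph on `m` labelled vertices) is mapped to an edge of `X`. -/
def copyCount {n m : ℕ} (X : Config n) (G : Finset (EdgeK m)) : ℕ :=
  (univ.filter fun v : Fin m ↪ Fin n => ∀ a ∈ G, X (mapEdge v a) = true).card

/-- `N_G(X, e)`: the number of such tuples for `X ∪ {e}` which moreover use the edge `e`. -/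
def rootedCount {n m : ℕ} (X : Config n) (G : Finset (EdgeK m)) (e : EdgeK n) : ℕ :=
  (univ.filter fun v : Fin m ↪ Fin n =>
    (∃ a ∈ G, mapEdge v a = e) ∧ ∀ a ∈ G, addEdge X e (mapEdge v a) = true).card

/-- `N_G(X, e, e')`: the number of such tuples for `X ∪ {e, e'}` which use both `e` and `e'`. -/
def rooted2Count {n m : ℕ} (X : Config n) (G : Finset (EdgeK m)) (e e' : EdgeK n) : ℕ :=
  (univ.filter fun v : Fin m ↪ Fin n =>
    (∃ a ∈ G, mapEdge v a = e) ∧ (∃ a ∈ G, mapEdge v a = e') ∧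
      ∀ a ∈ G, addEdge (addEdge X e) e' (mapEdge v a) = true).card

/-- The number of edges of the graph `X`. -/
def edgeCount {n : ℕ} (X : Config n) : ℕ := (univ.filter fun e => X e = true).card

/-- Hamming distance between two graphs: the number of edges of disagreement. -/
def hamDist {n : ℕ} (X Y : Config n) : ℕ := (univ.filter fun f => X f ≠ Y f).card

/-- The Hamiltonian `H(X) = ∑ i, β i * N_{G_i}(X) / n^(|V_i| - 2)`. -/
def ergmH {s : ℕ} (V : Fin s → ℕ) (Pt : ∀ i, Finset (EdgeK (V i))) (β : Fin s → ℝ)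
    (n : ℕ) (X : Config n) : ℝ :=
  ∑ i, β i * (copyCount X (Pt i) : ℝ) / (n : ℝ) ^ (V i - 2)

/-- The Gibbs measure `p_n(X) = exp(H(X)) / Z_n`. -/
def gibbs {s : ℕ} (V : Fin s → ℕ) (Pt : ∀ i, Finset (EdgeK (V i))) (β : Fin s → ℝ)
    (n : ℕ) (X : Config n) : ℝ :=
  Real.exp (ergmH V Pt β n X) / ∑ Y : Config n, Real.exp (ergmH V Pt β n Y)

/-- `∂_e H(X) = H(X_{e+}) - H(X_{e-})`. -/
def dH {s : ℕ} (V : Fin s → ℕ) (Pt : ∀ i, Finset (EdgeK (V i))) (β : Fin s → ℝ)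
    (n : ℕ) (X : Config n) (e : EdgeK n) : ℝ :=
  ergmH V Pt β n (setEdge X e true) - ergmH V Pt β n (setEdge X e false)

/-- The transition kernel of the Glauber dynamics: a uniformly random edge `e` of `K_n` is
chosen and set present with probability `exp(∂_e H(X)) /(1 + exp(∂_e H(X)))`, absent
otherwise. -/
def glauber {s : ℕ} (V : Fin s → ℕ) (Pt : ∀ i, Finset (EdgeK (V i))) (β : Fin s → ℝ)
    (n : ℕ) (X Y : Config n) : ℝ :=
  ((n.choose 2 : ℝ))⁻¹ * ∑ e : EdgeK n,
    ((if Y = setEdge X e true then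
        Real.exp (dH V Pt β n X e) / (1 + Real.exp (dH V Pt β n X e)) else 0)
      + (if Y = setEdge X e false then 1 / (1 + Real.exp (dH V Pt β n X e)) else 0))

/-- The `t`-step distribution of the Markov chain with one-step kernel `K`,
started from a given state. -/
def kernelStep {n : ℕ} (K : Config n → Config n → ℝ) : ℕ → Config n → Config n → ℝ
  | 0 => fun x y => if y = x then 1 else 0
  | (t+1) => fun x y => ∑ z, kernelStep K t x z * K z y

/-- Total variation distance between two (signed) distributions on `Config n`. -/
def tvDist {n : ℕ} (μ ν : Config n → ℝ) : ℝ := (∑ Y, |μ Y - ν Y|) / 2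

/-- `mixes K π t` says that after `t` steps the chain with kernel `K` is within total
variation distance `e⁻¹` of `π` from every starting state. -/
def mixes {n : ℕ} (K : Config n → Config n → ℝ) (π : Config n → ℝ) (t : ℕ) : Prop :=
  ∀ x, tvDist (kernelStep K t x) π ≤ Real.exp (-1)

/-- The mixing time: the least `t` such that from every starting state the chain is within
total variation distance `e⁻¹` of `π`. -/
def mixingTime {n : ℕ} (K : Config n → Config n → ℝ) (π : Config n → ℝ) : ℕ :=
  sInf {t | mixes K π t}

/-- `Ψ(p) = ∑ i, 2 β_i |E_i| p^(|E_i| - 1)`. -/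
def PsiF {s : ℕ} {V : Fin s → ℕ} (Pt : ∀ i, Finset (EdgeK (V i))) (β : Fin s → ℝ)
    (p : ℝ) : ℝ :=
  ∑ i, 2 * β i * ((Pt i).card : ℝ) * p ^ ((Pt i).card - 1)

/-- `φ(p) = exp(Ψ(p)) / (1 + exp(Ψ(p)))`. -/
def phiF {s : ℕ} {V : Fin s → ℕ} (Pt : ∀ i, Finset (EdgeK (V i))) (β : Fin s → ℝ)
    (p : ℝ) : ℝ :=
  Real.exp (PsiF Pt β p) / (1 + Real.exp (PsiF Pt β p))

/-- High temperature phase: `φ(p) = p` has a unique solution `p*` (in `[0,1]`), which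
moreover satisfies `φ'(p*) < 1`. -/
def HighTemp {s : ℕ} {V : Fin s → ℕ} (Pt : ∀ i, Finset (EdgeK (V i))) (β : Fin s → ℝ)
    (pstar : ℝ) : Prop :=
  pstar ∈ Set.Icc (0:ℝ) 1 ∧ phiF Pt β pstar = pstar ∧
    (∀ q ∈ Set.Icc (0:ℝ) 1, phiF Pt β q = q → q = pstar) ∧
    deriv (phiF Pt β) pstar < 1

/-- Low temperature phase: `φ(p) = p` has at least two solutions `p` with `φ'(p) < 1`. -/
def LowTemp {s : ℕ} {V : Fin s → ℕ} (Pt : ∀ i, Finset (EdgeK (V i))) (β : Fin s → ℝ) : Prop :=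
  ∃ p₁ p₂ : ℝ, p₁ ∈ Set.Icc (0:ℝ) 1 ∧ p₂ ∈ Set.Icc (0:ℝ) 1 ∧ p₁ ≠ p₂ ∧
    phiF Pt β p₁ = p₁ ∧ phiF Pt β p₂ = p₂ ∧
    deriv (phiF Pt β) p₁ < 1 ∧ deriv (phiF Pt β) p₂ < 1

/-- `r_G(X, e) = (N_G(X,e) / (2 |E(G)| n^(|V(G)|-2)))^(1/(|E(G)|-1))`. -/
def rG {n m : ℕ} (X : Config n) (G : Finset (EdgeK m)) (e : EdgeK n) : ℝ :=
  ((rootedCount X G e : ℝ) / (2 * (G.card : ℝ) * (n : ℝ) ^ (m - 2))) ^ (((G.card : ℝ) - 1)⁻¹)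

/-- The set of values `r_G(X,e)` over all edges `e` of `K_n` and all graphs `G` on at
most `L` vertices with at least two edges. -/
def rSet (L n : ℕ) (X : Config n) : Set ℝ :=
  {r | ∃ m, m ≤ L ∧ ∃ G : Finset (EdgeK m), 2 ≤ G.card ∧ ∃ e : EdgeK n, r = rG X G e}

/-- `r̄(X)`: the maximum of `r_G(X,e)` over all edges `e` of `K_n` and all graphs `G` on
at most `L` vertices with at least two edges. -/
def rbar (L n : ℕ) (X : Config n) : ℝ := sSup (rSet L n X)

/-- `r_min(X)`: the corresponding minimum. -/
def rmin (L n : ℕ) (X : Config n) : ℝ := sInf (rSet L n X)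

/-- The cycle `C_l` on `l` labelled vertices, as a pattern graph. -/
def cyclePattern (l : ℕ) [NeZero l] : Finset (EdgeK l) :=
  univ.filter fun e => ∃ i : Fin l, e.1 = s(i, i + 1)

/-- The probability of a length-`T` trajectory `w` for the chain with kernel `K`
started at `x`. -/
def trajProb {n T : ℕ} (K : Config n → Config n → ℝ) (x : Config n)
    (w : Fin (T+1) → Config n) : ℝ :=
  (if w 0 = x then 1 else 0) * ∏ i : Fin T, K (w i.castSucc) (w i.succ)

/-- Two edges of `K_n` share a vertex. -/
def sharesVertex {n : ℕ} (e e' : EdgeK n) : Prop := ∃ v, v ∈ e.1 ∧ v ∈ e'.1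

end


namespace DriftAux

variable {n m : ℕ}

/-- The finset underlying `rootedCount`. -/
noncomputable def rSetF (X : Config n) (G : Finset (EdgeK m)) (e : EdgeK n) :
    Finset (Fin m ↪ Fin n) :=
  univ.filter fun v => (∃ a ∈ G, mapEdge v a = e) ∧ ∀ a ∈ G, addEdge X e (mapEdge v a) = true

lemma rootedCount_eq (X : Config n) (G : Finset (EdgeK m)) (e : EdgeK n) :
    rootedCount X G e = (rSetF X G e).card := rfl

lemma mapEdge_inj (v : Fin m ↪ Fin n) : Function.Injective (mapEdge v) := by
  intro a b h
  exact Subtype.ext (Sym2.map.injective v.injective (congrArg Subtype.val h))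

lemma addEdge_eq_setEdge (X : Config n) (e : EdgeK n) : addEdge X e = setEdge X e true := rfl

lemma setEdge_self {X : Config n} {e : EdgeK n} {b : Bool} (h : X e = b) :
    setEdge X e b = X := by
  funext f; simp only [setEdge]; split
  · next hf => rw [hf, h]
  · rfl

lemma addEdge_setEdge (X : Config n) (e : EdgeK n) (b : Bool) :
    addEdge (setEdge X e b) e = addEdge X e := by
  funext f; simp only [addEdge, setEdge]
  split
  · rfl
  · next h => simp [h]

lemma addEdge_apply (X : Config n) (e f : EdgeK n) :
    addEdge X e f = if f = e then true else X f := rfl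

lemma setEdge_apply (X : Config n) (e : EdgeK n) (b : Bool) (f : EdgeK n) :
    setEdge X e b f = if f = e then b else X f := rfl

lemma rSetF_setEdge_self (X : Config n) (e : EdgeK n) (b : Bool) (G : Finset (EdgeK m)) :
    rSetF (setEdge X e b) G e = rSetF X G e := by
  unfold rSetF
  rw [addEdge_setEdge]

/-- Removing an edge `e' ≠ e` kills exactly the rooted copies that use `e'`. -/
lemma rSetF_setEdge_false (X : Config n) (G : Finset (EdgeK m)) {e e' : EdgeK n}
    (h : e' ≠ e) :
    rSetF (setEdge X e' false) G e =
      (rSetF (setEdge X e' true) G e).filter fun v => ¬ ∃ b ∈ G, mapEdge v b = e' := by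
  ext v
  simp only [rSetF, mem_filter, mem_univ, true_and]
  constructor
  · rintro ⟨huse, hall⟩
    refine ⟨⟨huse, fun a ha => ?_⟩, ?_⟩
    · have := hall a ha
      rw [addEdge_apply] at this ⊢
      by_cases hae : mapEdge v a = e
      · simp [hae]
      · rw [if_neg hae] at this ⊢
        rw [setEdge_apply] at this ⊢
        by_cases hae' : mapEdge v a = e'
        · rw [if_pos hae'] at this; exact absurd this (by simp)
        · rw [if_neg hae'] at this ⊢; exact this
    · rintro ⟨b, hb, hbe⟩
      have := hall b hb
      rw [addEdge_apply, if_neg (hbe ▸ h), hbe, setEdge_apply, if_pos rfl] at this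
      exact absurd this (by simp)
  · rintro ⟨⟨huse, hall⟩, hnot⟩
    refine ⟨huse, fun a ha => ?_⟩
    have := hall a ha
    rw [addEdge_apply] at this ⊢
    by_cases hae : mapEdge v a = e
    · simp [hae]
    · rw [if_neg hae] at this ⊢
      rw [setEdge_apply] at this ⊢
      have hae' : mapEdge v a ≠ e' := fun hc => hnot ⟨a, ha, hc⟩
      rw [if_neg hae'] at this ⊢
      exact this

lemma rooted_split (X : Config n) (G : Finset (EdgeK m)) {e e' : EdgeK n} (h : e' ≠ e) :
    rootedCount (setEdge X e' true) G e =
      ((rSetF (setEdge X e' true) G e).filter fun v => ∃ b ∈ G, mapEdge v b = e').card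
        + rootedCount (setEdge X e' false) G e := by
  rw [rootedCount_eq, rootedCount_eq, rSetF_setEdge_false X G h]
  exact (card_filter_add_card_filter_not _).symm

noncomputable def cSetF (X : Config n) (G : Finset (EdgeK m)) : Finset (Fin m ↪ Fin n) :=
  univ.filter fun v => ∀ a ∈ G, X (mapEdge v a) = true

lemma copyCount_eq (X : Config n) (G : Finset (EdgeK m)) :
    copyCount X G = (cSetF X G).card := rfl

lemma rSetF_eq_filter (X : Config n) (G : Finset (EdgeK m)) (e : EdgeK n) :
    rSetF X G e = (cSetF (setEdge X e true) G).filter fun v => ∃ a ∈ G, mapEdge v a = e := by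
  ext v
  simp only [rSetF, cSetF, mem_filter, mem_univ, true_and, addEdge_eq_setEdge]
  exact ⟨fun h => ⟨(Finset.mem_filter.mp h).2.2, (Finset.mem_filter.mp h).2.1⟩,
    fun h => Finset.mem_filter.mpr ⟨mem_univ _, h.2, h.1⟩⟩

lemma cSetF_setEdge_false (X : Config n) (G : Finset (EdgeK m)) (e : EdgeK n) :
    cSetF (setEdge X e false) G =
      (cSetF (setEdge X e true) G).filter fun v => ¬ ∃ a ∈ G, mapEdge v a = e := by
  ext v
  simp only [cSetF, mem_filter, mem_univ, true_and]
  constructor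
  · intro hall
    refine ⟨fun a ha => ?_, ?_⟩
    · have := hall a ha
      rw [setEdge_apply] at this ⊢
      by_cases hae : mapEdge v a = e
      · rw [if_pos hae] at this; exact absurd this (by simp)
      · rw [if_neg hae] at this ⊢; exact this
    · rintro ⟨a, ha, hae⟩
      have := hall a ha
      rw [setEdge_apply, if_pos hae] at this
      exact absurd this (by simp)
  · rintro ⟨hall, hnot⟩
    intro a ha
    have := hall a ha
    have hae : mapEdge v a ≠ e := fun hc => hnot ⟨a, ha, hc⟩
    rw [setEdge_apply, if_neg hae] at this ⊢
    exact this

lemma copy_split (X : Config n) (G : Finset (EdgeK m)) (e : EdgeK n) :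
    copyCount (setEdge X e true) G = rootedCount X G e + copyCount (setEdge X e false) G := by
  rw [copyCount_eq, copyCount_eq, cSetF_setEdge_false, rootedCount_eq, rSetF_eq_filter]
  exact (card_filter_add_card_filter_not _).symm

/-- `∂_e H(X) = ∑ i, β i * N_{G_i}(X, e) / n^(V i - 2)`. -/
lemma dH_eq {s : ℕ} (V : Fin s → ℕ) (Pt : ∀ i, Finset (EdgeK (V i))) (β : Fin s → ℝ)
    (X : Config n) (e : EdgeK n) :
    dH V Pt β n X e = ∑ i, β i * (rootedCount X (Pt i) e : ℝ) / (n : ℝ) ^ (V i - 2) := by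
  unfold dH ergmH
  rw [← Finset.sum_sub_distrib]
  refine Finset.sum_congr rfl fun i _ => ?_
  rw [copy_split X (Pt i) e]
  push_cast
  ring

lemma card_fix2 {i j : Fin m} (hij : i ≠ j) (x y : Fin n) :
    (univ.filter fun v : Fin m ↪ Fin n => v i = x ∧ v j = y).card ≤ n ^ (m - 2) := by
  classical
  have hcard : Fintype.card ({k : Fin m // k ≠ i ∧ k ≠ j} → Fin n) = n ^ (m - 2) := by
    rw [Fintype.card_fun, Fintype.card_fin]
    congr 1
    rw [Fintype.card_subtype]
    have : (univ.filter fun k : Fin m => k ≠ i ∧ k ≠ j) = univ \ {i, j} := by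
      ext k; simp [not_or]
    rw [this, card_sdiff_of_subset (subset_univ _), card_univ, Fintype.card_fin,
      card_insert_of_notMem (by simp [hij]), card_singleton]
  calc (univ.filter fun v : Fin m ↪ Fin n => v i = x ∧ v j = y).card
      ≤ (univ : Finset ({k : Fin m // k ≠ i ∧ k ≠ j} → Fin n)).card := by
        apply Finset.card_le_card_of_injOn (fun v k => v k.1) (fun v _ => mem_univ _)
        intro v hv w hw h
        have hv' := (mem_filter.mp hv).2
        have hw' := (mem_filter.mp hw).2
        apply DFunLike.ext
        intro k
        by_cases hk1 : k = i
        · rw [hk1, hv'.1, hw'.1]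
        · by_cases hk2 : k = j
          · rw [hk2, hv'.2, hw'.2]
          · exact congrFun h ⟨k, hk1, hk2⟩
    _ = n ^ (m - 2) := by rw [card_univ, hcard]

lemma card_mapEdge_eq (a : EdgeK m) (e : EdgeK n) :
    (univ.filter fun v : Fin m ↪ Fin n => mapEdge v a = e).card ≤ 2 * n ^ (m - 2) := by
  classical
  obtain ⟨i, j, hij⟩ : ∃ i j, a.1 = s(i, j) := by
    induction a.1 using Sym2.ind with | _ x y => exact ⟨x, y, rfl⟩
  obtain ⟨x, y, hxy⟩ : ∃ x y, e.1 = s(x, y) := by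
    induction e.1 using Sym2.ind with | _ x y => exact ⟨x, y, rfl⟩
  have hijne : i ≠ j := by
    have := a.2; rw [hij] at this; simpa [Sym2.mk_isDiag_iff] using this
  have hsub : (univ.filter fun v : Fin m ↪ Fin n => mapEdge v a = e) ⊆
      (univ.filter fun v : Fin m ↪ Fin n => v i = x ∧ v j = y) ∪
      (univ.filter fun v : Fin m ↪ Fin n => v i = y ∧ v j = x) := by
    intro v hv
    have hv' := (mem_filter.mp hv).2
    have : (mapEdge v a).1 = e.1 := congrArg Subtype.val hv'
    rw [hxy] at this
    have h2 : Sym2.map v a.1 = s(x, y) := this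
    rw [hij, Sym2.map_pair_eq] at h2
    rw [Sym2.eq_iff] at h2
    rcases h2 with h2 | h2
    · exact mem_union_left _ (mem_filter.mpr ⟨mem_univ _, h2⟩)
    · exact mem_union_right _ (mem_filter.mpr ⟨mem_univ _, ⟨h2.1, h2.2⟩⟩)
  calc (univ.filter fun v : Fin m ↪ Fin n => mapEdge v a = e).card
      ≤ _ := card_le_card hsub
    _ ≤ (univ.filter fun v : Fin m ↪ Fin n => v i = x ∧ v j = y).card +
        (univ.filter fun v : Fin m ↪ Fin n => v i = y ∧ v j = x).card := card_union_le _ _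
    _ ≤ n ^ (m - 2) + n ^ (m - 2) := Nat.add_le_add (card_fix2 hijne x y) (card_fix2 hijne y x)
    _ = 2 * n ^ (m - 2) := by ring

lemma rootedCount_le (X : Config n) (G : Finset (EdgeK m)) (e : EdgeK n) :
    rootedCount X G e ≤ 2 * G.card * n ^ (m - 2) := by
  classical
  have hsub : rSetF X G e ⊆ G.biUnion fun a => univ.filter fun v => mapEdge v a = e := by
    intro v hv
    obtain ⟨a, ha, hae⟩ := ((mem_filter.mp hv).2).1
    exact mem_biUnion.mpr ⟨a, ha, mem_filter.mpr ⟨mem_univ _, hae⟩⟩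
  calc rootedCount X G e ≤ _ := card_le_card hsub
    _ ≤ ∑ a ∈ G, (univ.filter fun v => mapEdge v a = e).card := card_biUnion_le
    _ ≤ ∑ _a ∈ G, 2 * n ^ (m - 2) := Finset.sum_le_sum fun a _ => card_mapEdge_eq a e
    _ = 2 * G.card * n ^ (m - 2) := by rw [Finset.sum_const, smul_eq_mul]; ring

lemma rG_nonneg (X : Config n) (G : Finset (EdgeK m)) (e : EdgeK n) : 0 ≤ rG X G e :=
  Real.rpow_nonneg (div_nonneg (Nat.cast_nonneg _) (by positivity)) _

lemma rG_base_le_one (X : Config n) (G : Finset (EdgeK m)) (e : EdgeK n) :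
    (rootedCount X G e : ℝ) / (2 * (G.card : ℝ) * (n : ℝ) ^ (m - 2)) ≤ 1 := by
  set D : ℝ := 2 * (G.card : ℝ) * (n : ℝ) ^ (m - 2) with hD
  rcases eq_or_lt_of_le (show (0:ℝ) ≤ D by positivity) with h0 | h0
  · rw [← h0, div_zero]; norm_num
  · rw [div_le_one h0]
    have := rootedCount_le X G e
    calc (rootedCount X G e : ℝ) ≤ ((2 * G.card * n ^ (m - 2) : ℕ) : ℝ) := by
          exact_mod_cast this
      _ = D := by push_cast [hD]; ring

lemma rG_le_one (X : Config n) (G : Finset (EdgeK m)) (e : EdgeK n) (h2 : 1 ≤ G.card) :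
    rG X G e ≤ 1 := by
  apply Real.rpow_le_one (div_nonneg (Nat.cast_nonneg _) (by positivity))
    (rG_base_le_one X G e)
  have : (1 : ℝ) ≤ (G.card : ℝ) := by exact_mod_cast h2
  simp only [inv_nonneg]
  linarith

lemma rG_pow (X : Config n) (G : Finset (EdgeK m)) (e : EdgeK n) (h2 : 2 ≤ G.card) :
    rG X G e ^ (G.card - 1) =
      (rootedCount X G e : ℝ) / (2 * (G.card : ℝ) * (n : ℝ) ^ (m - 2)) := by
  have hbase : (0:ℝ) ≤ (rootedCount X G e : ℝ) / (2 * (G.card : ℝ) * (n : ℝ) ^ (m - 2)) :=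
    div_nonneg (Nat.cast_nonneg _) (by positivity)
  rw [rG, ← Real.rpow_natCast (_ ^ _) (G.card - 1), ← Real.rpow_mul hbase]
  have hc : ((G.card - 1 : ℕ) : ℝ) = (G.card : ℝ) - 1 := by
    rw [Nat.cast_sub (by omega)]; norm_num
  have hne : (G.card : ℝ) - 1 ≠ 0 := by
    have : (2 : ℝ) ≤ (G.card : ℝ) := by exact_mod_cast h2
    linarith
  rw [hc, inv_mul_cancel₀ hne, Real.rpow_one]

lemma bddAbove_rSet (L : ℕ) (X : Config n) : BddAbove (rSet L n X) := by
  refine ⟨1, fun r hr => ?_⟩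
  obtain ⟨m', hm', G', hG', e', rfl⟩ := hr
  exact rG_le_one X G' e' (by omega)

lemma rG_le_rbar {L : ℕ} (X : Config n) (G : Finset (EdgeK m)) (e : EdgeK n)
    (hm : m ≤ L) (h2 : 2 ≤ G.card) : rG X G e ≤ rbar L n X :=
  le_csSup (bddAbove_rSet L X) ⟨m, hm, G, h2, e, rfl⟩

lemma rbar_nonneg {L : ℕ} (X : Config n) (G : Finset (EdgeK m)) (e : EdgeK n)
    (hm : m ≤ L) (h2 : 2 ≤ G.card) : 0 ≤ rbar L n X :=
  le_trans (rG_nonneg X G e) (rG_le_rbar X G e hm h2)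

lemma fin2_eq_of_ne {i p q : Fin 2} (hp : p ≠ i) (hq : q ≠ i) : p = q := by
  have h1 : p.val ≠ i.val := fun h => hp (Fin.ext h)
  have h2 : q.val ≠ i.val := fun h => hq (Fin.ext h)
  have := p.isLt; have := q.isLt; have := i.isLt
  exact Fin.ext (by omega)

lemma rootedCount_two {m : ℕ} (hm : m = 2) (P : Finset (EdgeK m)) (hP : P.card = 1)
    (X : Config n) (e : EdgeK n) : rootedCount X P e = 2 := by
  subst hm
  obtain ⟨a, rfl⟩ := card_eq_one.mp hP
  obtain ⟨i, j, hij1⟩ : ∃ i j, a.1 = s(i, j) := by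
    induction a.1 using Sym2.ind with | _ x y => exact ⟨x, y, rfl⟩
  have hij : i ≠ j := by
    have := a.2; rw [hij1] at this; simpa [Sym2.mk_isDiag_iff] using this
  obtain ⟨x, y, hxy1⟩ : ∃ x y, e.1 = s(x, y) := by
    induction e.1 using Sym2.ind with | _ x y => exact ⟨x, y, rfl⟩
  have hxy : x ≠ y := by
    have := e.2; rw [hxy1] at this; simpa [Sym2.mk_isDiag_iff] using this
  have hinj : ∀ u w : Fin n, u ≠ w → Function.Injective (fun k : Fin 2 => if k = i then u else w) := by
    intro u w huw k k' h
    by_cases h1 : k = i <;> by_cases h2 : k' = i <;> simp only [h1, h2, if_pos, if_neg,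
      ite_true, ite_false] at h
    · rw [h1, h2]
    · exact absurd h huw
    · exact absurd h.symm huw
    · exact fin2_eq_of_ne h1 h2
  set E1 : Fin 2 ↪ Fin n := ⟨fun k => if k = i then x else y, hinj x y hxy⟩ with hE1
  set E2 : Fin 2 ↪ Fin n := ⟨fun k => if k = i then y else x, hinj y x hxy.symm⟩ with hE2
  have hatoe : ∀ v : Fin 2 ↪ Fin n, mapEdge v a = e ↔
      (v i = x ∧ v j = y) ∨ (v i = y ∧ v j = x) := by
    intro v
    rw [show (mapEdge v a = e) ↔ (mapEdge v a).1 = e.1 from Subtype.ext_iff]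
    show Sym2.map v a.1 = e.1 ↔ _
    rw [hij1, hxy1, Sym2.map_pair_eq, Sym2.eq_iff]
  have hvE1 : ∀ v : Fin 2 ↪ Fin n, v = E1 ↔ (v i = x ∧ v j = y) := by
    intro v
    constructor
    · rintro rfl
      constructor
      · simp [hE1]
      · simp [hE1, hij.symm]
    · rintro ⟨h1, h2⟩
      apply DFunLike.ext
      intro k
      by_cases hk : k = i
      · subst hk; simpa [hE1] using h1
      · have : k = j := fin2_eq_of_ne hk (Ne.symm hij)
        subst this; simpa [hE1, hk] using h2
  have hvE2 : ∀ v : Fin 2 ↪ Fin n, v = E2 ↔ (v i = y ∧ v j = x) := by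
    intro v
    constructor
    · rintro rfl
      constructor
      · simp [hE2]
      · simp [hE2, hij.symm]
    · rintro ⟨h1, h2⟩
      apply DFunLike.ext
      intro k
      by_cases hk : k = i
      · subst hk; simpa [hE2] using h1
      · have : k = j := fin2_eq_of_ne hk (Ne.symm hij)
        subst this; simpa [hE2, hk] using h2
  have hset : rSetF X {a} e = {E1, E2} := by
    ext v
    simp only [rSetF, mem_filter, mem_univ, true_and, Finset.mem_singleton,
      Finset.mem_insert, exists_eq_left, forall_eq]
    constructor
    · rintro ⟨h1, _⟩
      rcases (hatoe v).mp h1 with h | h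
      · exact Or.inl ((hvE1 v).mpr h)
      · exact Or.inr ((hvE2 v).mpr h)
    · intro h
      have h1 : mapEdge v a = e := by
        rcases h with h | h
        · exact (hatoe v).mpr (Or.inl ((hvE1 v).mp h))
        · exact (hatoe v).mpr (Or.inr ((hvE2 v).mp h))
      refine ⟨h1, ?_⟩
      rw [h1, addEdge_apply, if_pos rfl]
  have hne : E1 ≠ E2 := by
    intro h
    have := DFunLike.congr_fun h i
    simp [hE1, hE2] at this
    exact hxy this
  rw [rootedCount_eq, hset, card_insert_of_notMem (by simpa using hne), card_singleton]

lemma dH_le_Psi {s L : ℕ} (hs : 0 < s) (V : Fin s → ℕ) (Pt : ∀ i, Finset (EdgeK (V i)))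
    (β : Fin s → ℝ) (hVL : ∀ i, V i ≤ L)
    (hG1V : V ⟨0, hs⟩ = 2) (hG1E : (Pt ⟨0, hs⟩).card = 1)
    (hβ : ∀ i : Fin s, 0 < (i : ℕ) → 0 < β i) (hn : 1 ≤ n)
    (X : Config n) (e : EdgeK n) :
    dH V Pt β n X e ≤ PsiF Pt β (rbar L n X) := by
  rw [dH_eq, PsiF]
  apply Finset.sum_le_sum
  intro i _
  have hnpos : (0:ℝ) < (n : ℝ) ^ (V i - 2) := by positivity
  by_cases hi0 : (i : ℕ) = 0
  · -- the single-edge term is exactly 2 β i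
    have hieq : i = ⟨0, hs⟩ := Fin.ext hi0
    subst hieq
    rw [rootedCount_two hG1V (Pt ⟨0, hs⟩) hG1E X e, hG1E, hG1V]
    norm_num
    linarith [le_refl (β ⟨0, hs⟩)]
  · have hβi : 0 < β i := hβ i (Nat.pos_of_ne_zero hi0)
    rcases Nat.lt_or_ge (Pt i).card 2 with hc | hc
    · interval_cases h : (Pt i).card
      · -- no edges: rooted count is zero
        have : rootedCount X (Pt i) e = 0 := by
          rw [rootedCount_eq, Finset.card_eq_zero]
          apply Finset.filter_false_of_mem
          intro v _
          rw [Finset.card_eq_zero] at h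
          simp [h]
        rw [this]
        simp
      · -- a single edge (plus isolated vertices)
        have hle := rootedCount_le X (Pt i) e
        rw [h] at hle
        have hle' : (rootedCount X (Pt i) e : ℝ) ≤ 2 * (n : ℝ) ^ (V i - 2) := by
          calc (rootedCount X (Pt i) e : ℝ) ≤ ((2 * 1 * n ^ (V i - 2) : ℕ) : ℝ) := by
                exact_mod_cast hle
            _ = 2 * (n : ℝ) ^ (V i - 2) := by push_cast; ring
        calc β i * (rootedCount X (Pt i) e : ℝ) / (n : ℝ) ^ (V i - 2)
            ≤ β i * (2 * (n : ℝ) ^ (V i - 2)) / (n : ℝ) ^ (V i - 2) := by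
              apply div_le_div_of_nonneg_right ?_ hnpos.le
              exact mul_le_mul_of_nonneg_left hle' hβi.le
          _ = 2 * β i * ((1:ℕ):ℝ) * rbar L n X ^ (1 - 1) := by
              field_simp
              ring
    · -- at least two edges: compare with r̄
      have hpow := rG_pow X (Pt i) e hc
      have hrr : rG X (Pt i) e ≤ rbar L n X := rG_le_rbar X (Pt i) e (hVL i) hc
      have hr0 : 0 ≤ rG X (Pt i) e := rG_nonneg X (Pt i) e
      have hNe : (rootedCount X (Pt i) e : ℝ) / (n : ℝ) ^ (V i - 2)
          = 2 * ((Pt i).card : ℝ) * rG X (Pt i) e ^ ((Pt i).card - 1) := by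
        rw [hpow]
        have hcpos : (0:ℝ) < 2 * ((Pt i).card : ℝ) := by
          have : (0:ℝ) < ((Pt i).card : ℝ) := by exact_mod_cast Nat.lt_of_lt_of_le Nat.zero_lt_two hc
          linarith
        field_simp
      rw [div_eq_mul_inv, mul_assoc, ← div_eq_mul_inv, hNe]
      have : rG X (Pt i) e ^ ((Pt i).card - 1) ≤ rbar L n X ^ ((Pt i).card - 1) :=
        pow_le_pow_left₀ hr0 hrr _
      calc β i * (2 * ((Pt i).card : ℝ) * rG X (Pt i) e ^ ((Pt i).card - 1))
          ≤ β i * (2 * ((Pt i).card : ℝ) * rbar L n X ^ ((Pt i).card - 1)) := by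
            apply mul_le_mul_of_nonneg_left ?_ hβi.le
            apply mul_le_mul_of_nonneg_left this (by positivity)
        _ = 2 * β i * ((Pt i).card : ℝ) * rbar L n X ^ ((Pt i).card - 1) := by ring

lemma lower_bound (X : Config n) (G : Finset (EdgeK m)) (e : EdgeK n) :
    (G.card - 1) * rootedCount X G e ≤
      ∑ e' ∈ univ.filter (fun e' : EdgeK n => X e' = true ∧ e' ≠ e),
        ((rSetF X G e).filter fun v => ∃ b ∈ G, mapEdge v b = e').card := by
  classical
  set S := rSetF X G e with hS
  have step1 : (G.card - 1) * S.card ≤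
      ∑ v ∈ S, (G.filter fun b => mapEdge v b ≠ e).card := by
    rw [mul_comm, ← smul_eq_mul, ← Finset.sum_const]
    apply Finset.sum_le_sum
    intro v _
    have hpart := Finset.card_filter_add_card_filter_not
      (s := G) (p := fun b => mapEdge v b = e)
    have hcard1 : (G.filter fun b => mapEdge v b = e).card ≤ 1 := by
      apply Finset.card_le_one.mpr
      intro b hb c hc
      exact mapEdge_inj v ((mem_filter.mp hb).2.trans (mem_filter.mp hc).2.symm)
    simp only [ne_eq]
    omega
  have step2 : ∑ v ∈ S, (G.filter fun b => mapEdge v b ≠ e).card ≤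
      ∑ e' ∈ univ.filter (fun e' : EdgeK n => X e' = true ∧ e' ≠ e),
        (S.filter fun v => ∃ b ∈ G, mapEdge v b = e').card := by
    rw [← Finset.card_sigma, ← Finset.card_sigma]
    apply Finset.card_le_card_of_injOn
      (fun p => ⟨mapEdge p.1 p.2, p.1⟩)
    · rintro ⟨v, b⟩ hp
      rw [Finset.mem_coe, Finset.mem_sigma] at hp ⊢
      obtain ⟨hv, hb⟩ := hp
      have hbG := (mem_filter.mp hb).1
      have hbne := (mem_filter.mp hb).2
      have hvS := hv
      rw [hS, rSetF, mem_filter] at hvS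
      have hXtrue : X (mapEdge v b) = true := by
        have := hvS.2.2 b hbG
        rw [addEdge_apply, if_neg hbne] at this
        exact this
      constructor
      · rw [mem_filter]
        exact ⟨mem_univ _, hXtrue, hbne⟩
      · rw [mem_filter]
        exact ⟨hv, b, hbG, rfl⟩
    · rintro ⟨v, b⟩ hp ⟨w, c⟩ hq h
      obtain ⟨h1, h2⟩ := Sigma.mk.inj_iff.mp h
      have hvw : v = w := eq_of_heq h2
      subst hvw
      have : b = c := mapEdge_inj v h1
      subst this
      rfl
  exact le_trans step1 step2

lemma upper_bound (X : Config n) (G : Finset (EdgeK m)) (e : EdgeK n) (hne : G.Nonempty) :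
    ∑ e' ∈ univ.erase e,
        ((rSetF (setEdge X e' true) G e).filter fun v => ∃ b ∈ G, mapEdge v b = e').card ≤
      ∑ b ∈ G, rootedCount X (G.erase b) e := by
  classical
  simp only [rootedCount_eq]
  rw [← Finset.card_sigma, ← Finset.card_sigma]
  apply Finset.card_le_card_of_injOn
    (fun p => if h : ∃ b ∈ G, mapEdge p.2 b = p.1 then ⟨h.choose, p.2⟩
      else ⟨hne.choose, p.2⟩)
  · rintro ⟨e', v⟩ hp
    rw [Finset.mem_coe, Finset.mem_sigma] at hp
    obtain ⟨he', hv⟩ := hp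
    have he'e : e' ≠ e := Finset.ne_of_mem_erase he'
    rw [mem_filter] at hv
    obtain ⟨hvS, huses⟩ := hv
    dsimp only at huses ⊢
    rw [dif_pos huses]
    rw [Finset.mem_coe, Finset.mem_sigma]
    obtain ⟨hbG, hbe⟩ := huses.choose_spec
    set b := huses.choose with hb
    refine ⟨hbG, ?_⟩
    rw [rSetF, mem_filter] at hvS ⊢
    obtain ⟨_, ⟨a, haG, hae⟩, hall⟩ := hvS
    refine ⟨mem_univ _, ⟨a, ?_, hae⟩, ?_⟩
    · apply Finset.mem_erase.mpr
      refine ⟨?_, haG⟩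
      intro hab
      rw [hab, hbe] at hae
      exact he'e hae
    · intro c hc
      obtain ⟨hcb, hcG⟩ := Finset.mem_erase.mp hc
      have := hall c hcG
      rw [addEdge_apply] at this ⊢
      by_cases hce : mapEdge v c = e
      · rw [if_pos hce]
      · rw [if_neg hce] at this ⊢
        have hcne' : mapEdge v c ≠ e' := by
          intro hcc
          exact hcb (mapEdge_inj v (hcc.trans hbe.symm))
        rw [setEdge_apply, if_neg hcne'] at this
        exact this
  · rintro ⟨e', v⟩ hp ⟨f', w⟩ hq h
    rw [Finset.mem_coe, Finset.mem_sigma] at hp hq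
    have hup : ∃ b ∈ G, mapEdge v b = e' := (mem_filter.mp hp.2).2
    have huq : ∃ b ∈ G, mapEdge w b = f' := (mem_filter.mp hq.2).2
    dsimp only at h
    rw [dif_pos hup, dif_pos huq] at h
    obtain ⟨h1, h2⟩ := Sigma.mk.inj_iff.mp h
    have hvw : v = w := eq_of_heq h2
    subst hvw
    have he'f : e' = f' := by
      rw [← hup.choose_spec.2, ← huq.choose_spec.2, h1]
    subst he'f
    rfl

lemma erase_bound {L : ℕ} (X : Config n) (G : Finset (EdgeK m)) (e : EdgeK n) (b : EdgeK m)
    (hm : m ≤ L) (h2 : 2 ≤ G.card) (hb : b ∈ G) (hn : 1 ≤ n) :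
    (rootedCount X (G.erase b) e : ℝ) ≤
      2 * ((G.card : ℝ) - 1) * (n : ℝ) ^ (m - 2) * rbar L n X ^ (G.card - 2) := by
  have hc' : (G.erase b).card = G.card - 1 := card_erase_of_mem hb
  have hnp : (0:ℝ) < (n : ℝ) ^ (m - 2) := by positivity
  rcases eq_or_lt_of_le h2 with h2' | h3
  · have hc1 : (G.erase b).card = 1 := by omega
    have hle := rootedCount_le X (G.erase b) e
    rw [hc1] at hle
    have hcast : (G.card : ℝ) - 1 = 1 := by rw [← h2']; norm_num
    have h20 : G.card - 2 = 0 := by omega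
    rw [hcast, h20, pow_zero]
    calc (rootedCount X (G.erase b) e : ℝ) ≤ ((2 * 1 * n ^ (m - 2) : ℕ) : ℝ) := by
          exact_mod_cast hle
      _ = 2 * 1 * (n : ℝ) ^ (m - 2) * 1 := by push_cast; ring
  · have hc2 : 2 ≤ (G.erase b).card := by omega
    have hpow := rG_pow X (G.erase b) e hc2
    have hcpos : (0:ℝ) < ((G.erase b).card : ℝ) := by
      exact_mod_cast Nat.lt_of_lt_of_le Nat.zero_lt_two hc2
    have hN : (rootedCount X (G.erase b) e : ℝ) =
        2 * ((G.erase b).card : ℝ) * (n : ℝ) ^ (m - 2) *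
          rG X (G.erase b) e ^ ((G.erase b).card - 1) := by
      have hd : (2 * ((G.erase b).card : ℝ) * (n : ℝ) ^ (m - 2)) ≠ 0 := by positivity
      rw [hpow, mul_comm]
      exact (div_mul_cancel₀ _ hd).symm
    have hrr : rG X (G.erase b) e ≤ rbar L n X := rG_le_rbar X (G.erase b) e hm hc2
    have hr0 : 0 ≤ rG X (G.erase b) e := rG_nonneg X (G.erase b) e
    have hexp : (G.erase b).card - 1 = G.card - 2 := by omega
    have hccast : ((G.erase b).card : ℝ) = (G.card : ℝ) - 1 := by
      rw [hc', Nat.cast_sub (by omega)]; norm_num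
    rw [hN, hexp, hccast]
    apply mul_le_mul_of_nonneg_left (pow_le_pow_left₀ hr0 hrr _)
    have h1 : (0:ℝ) ≤ (G.card : ℝ) - 1 := by
      have : (2:ℝ) ≤ (G.card : ℝ) := by exact_mod_cast h2
      linarith
    exact mul_nonneg (mul_nonneg (by norm_num) h1) hnp.le

end DriftAux

open DriftAux

set_option maxHeartbeats 2000000

/-- **Drift bound (Lemma 6).** For every `ε > 0`, for all large `n`, every configuration
`X`, edge `e` and graph `G` on at most `L` vertices with at least two edges, the expected
one-step change of `N_G(X,e)/n^(|V|-2)` is at most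
`(2/C(n,2))·|E|·(|E|-1)·[-r_G(X,e)^(|E|-1) + φ(r̄(X))·r̄(X)^(|E|-2)] + ε/n²`. -/
theorem glauber_drift_bound
    {L s : ℕ} (hL : 2 ≤ L) (hs : 0 < s)
    (V : Fin s → ℕ) (Pt : ∀ i, Finset (EdgeK (V i))) (β : Fin s → ℝ)
    (hV2 : ∀ i, 2 ≤ V i) (hVL : ∀ i, V i ≤ L)
    (hG1V : V ⟨0, hs⟩ = 2) (hG1E : (Pt ⟨0, hs⟩).card = 1)
    (hβ : ∀ i : Fin s, 0 < (i : ℕ) → 0 < β i) :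
    ∀ ε : ℝ, 0 < ε → ∃ N : ℕ, ∀ n ≥ N, ∀ X : Config n, ∀ e : EdgeK n,
      ∀ m : ℕ, m ≤ L → ∀ G : Finset (EdgeK m), 2 ≤ G.card →
        ∑ Y : Config n, glauber V Pt β n X Y *
            (((rootedCount Y G e : ℝ) - (rootedCount X G e : ℝ)) / (n : ℝ) ^ (m - 2)) ≤
          2 / (n.choose 2 : ℝ) * (G.card : ℝ) * ((G.card : ℝ) - 1) *
              (-(rG X G e ^ (G.card - 1)) +
                phiF Pt β (rbar L n X) * rbar L n X ^ (G.card - 2)) +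
            ε / (n : ℝ) ^ 2 := by
  intro ε hε
  refine ⟨2, fun n hn X e m hm G h2 => ?_⟩
  classical
  have hn1 : 1 ≤ n := le_trans (by norm_num) hn
  have hM : (0:ℝ) < (n.choose 2 : ℝ) := by
    have : 0 < n.choose 2 := Nat.choose_pos hn
    exact_mod_cast this
  have hc : (0:ℝ) < (n:ℝ) ^ (m - 2) := by positivity
  have hGne : G.Nonempty := Finset.card_pos.mp (by omega)
  -- abbreviations
  set c : ℝ := (n:ℝ) ^ (m - 2) with hcdef
  set rb : ℝ := rbar L n X with hrb
  set Φ : ℝ := phiF Pt β rb with hΦ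
  set p : EdgeK n → ℝ :=
    fun e' => Real.exp (dH V Pt β n X e') / (1 + Real.exp (dH V Pt β n X e')) with hpdef
  set q : EdgeK n → ℝ := fun e' => 1 / (1 + Real.exp (dH V Pt β n X e')) with hqdef
  set N0 : ℕ := rootedCount X G e with hN0
  set U : EdgeK n → ℕ := fun e' =>
    ((rSetF (setEdge X e' true) G e).filter fun v => ∃ b ∈ G, mapEdge v b = e').card with hUdef
  set U' : EdgeK n → ℝ := fun e' => if e' = e then (0:ℝ) else (U e' : ℝ) with hU'def
  have hΦ0 : 0 ≤ Φ := by rw [hΦ, phiF]; positivity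
  have hexp_pos : ∀ e' : EdgeK n, (0:ℝ) < 1 + Real.exp (dH V Pt β n X e') := by
    intro e'; positivity
  have hp0 : ∀ e', 0 ≤ p e' := by
    intro e'; rw [hpdef]; positivity
  have hpq : ∀ e', p e' + q e' = 1 := by
    intro e'
    rw [hpdef, hqdef]
    simp only
    rw [← add_div, add_comm, div_self (ne_of_gt (hexp_pos e'))]
  -- sigmoid is monotone, hence p e' ≤ Φ
  have hsig : ∀ a b : ℝ, a ≤ b →
      Real.exp a / (1 + Real.exp a) ≤ Real.exp b / (1 + Real.exp b) := by
    intro a b hab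
    have h1 : (0:ℝ) < 1 + Real.exp a := by positivity
    have h2 : (0:ℝ) < 1 + Real.exp b := by positivity
    rw [div_le_div_iff₀ h1 h2]
    have := Real.exp_le_exp.mpr hab
    nlinarith [Real.exp_pos a, Real.exp_pos b]
  have hpΦ : ∀ e', p e' ≤ Φ := by
    intro e'
    rw [hpdef, hΦ, phiF]
    exact hsig _ _ (dH_le_Psi hs V Pt β hVL hG1V hG1E hβ hn1 X e')
  -- Step 1: rewrite the expectation as a sum over updated edges
  have key : (∑ Y : Config n, glauber V Pt β n X Y *
        (((rootedCount Y G e : ℝ) - (N0 : ℝ)) / c))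
      = ((n.choose 2 : ℝ))⁻¹ * ∑ e' : EdgeK n,
          (p e' * (((rootedCount (setEdge X e' true) G e : ℝ) - (N0 : ℝ)) / c)
            + q e' * (((rootedCount (setEdge X e' false) G e : ℝ) - (N0 : ℝ)) / c)) := by
    simp only [glauber, hpdef, hqdef, mul_assoc]
    rw [← Finset.mul_sum]
    congr 1
    rw [Finset.sum_congr rfl fun Y (_ : Y ∈ (univ : Finset (Config n))) =>
      Finset.sum_mul (univ : Finset (EdgeK n)) _ (((rootedCount Y G e : ℝ) - (N0 : ℝ)) / c)]
    rw [Finset.sum_comm]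
    refine Finset.sum_congr rfl fun e' _ => ?_
    rw [Finset.sum_congr rfl fun Y (_ : Y ∈ (univ : Finset (Config n))) => add_mul _ _
      (((rootedCount Y G e : ℝ) - (N0 : ℝ)) / c)]
    rw [Finset.sum_add_distrib]
    simp only [ite_mul, zero_mul]
    rw [Finset.sum_ite_eq' univ (setEdge X e' true), Finset.sum_ite_eq' univ (setEdge X e' false),
      if_pos (mem_univ _), if_pos (mem_univ _)]
  rw [key]
  -- Step 2: evaluate each term of the sum
  have hUapp : ∀ e' : EdgeK n, U e' =
      ((rSetF (setEdge X e' true) G e).filter fun v => ∃ b ∈ G, mapEdge v b = e').card :=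
    fun _ => rfl
  have hU'app : ∀ e' : EdgeK n, U' e' = if e' = e then (0:ℝ) else (U e' : ℝ) :=
    fun _ => rfl
  have hU'0 : ∀ e', 0 ≤ U' e' := by
    intro e'
    rw [hU'app]
    split
    · exact le_refl 0
    · exact Nat.cast_nonneg _
  have step2 : ∀ e' : EdgeK n,
      p e' * (((rootedCount (setEdge X e' true) G e : ℝ) - (N0 : ℝ)) / c)
        + q e' * (((rootedCount (setEdge X e' false) G e : ℝ) - (N0 : ℝ)) / c)
      = (p e' * U' e' - (if X e' = true then U' e' else 0)) / c := by
    intro e'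
    by_cases hee : e' = e
    · subst hee
      have h1 : rootedCount (setEdge X e' true) G e' = N0 := by
        rw [hN0, rootedCount_eq, rootedCount_eq, rSetF_setEdge_self]
      have h2 : rootedCount (setEdge X e' false) G e' = N0 := by
        rw [hN0, rootedCount_eq, rootedCount_eq, rSetF_setEdge_self]
      have h3 : U' e' = 0 := by rw [hU'app, if_pos rfl]
      rw [h1, h2, h3]
      simp
    · have hsplit := rooted_split X G (e := e) (e' := e') hee
      have hUeq : U' e' = (U e' : ℝ) := by rw [hU'app, if_neg hee]
      rw [← hUapp e'] at hsplit
      by_cases hX : X e' = true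
      · have hXt : setEdge X e' true = X := setEdge_self hX
        have h1 : rootedCount (setEdge X e' true) G e = N0 := by rw [hXt, hN0]
        have h2 : (rootedCount (setEdge X e' false) G e : ℝ) = (N0 : ℝ) - (U e' : ℝ) := by
          rw [h1] at hsplit
          have : (N0 : ℝ) = (U e' : ℝ) + (rootedCount (setEdge X e' false) G e : ℝ) := by
            exact_mod_cast hsplit
          linarith
        have hq1 : q e' = 1 - p e' := by have := hpq e'; linarith
        rw [h1, h2, hUeq, if_pos hX, hq1]
        ring
      · have hXf : setEdge X e' false = X := by
          apply setEdge_self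
          exact Bool.not_eq_true (X e') ▸ hX
        have h2 : rootedCount (setEdge X e' false) G e = N0 := by rw [hXf, hN0]
        have h1 : (rootedCount (setEdge X e' true) G e : ℝ) = (N0 : ℝ) + (U e' : ℝ) := by
          rw [h2, add_comm] at hsplit
          exact_mod_cast hsplit
        rw [h1, h2, hUeq, if_neg hX]
        ring
  rw [Finset.sum_congr rfl fun e' (_ : e' ∈ (univ : Finset (EdgeK n))) => step2 e']
  rw [← Finset.sum_div, Finset.sum_sub_distrib]
  -- Upper bound for the positive part
  have hsumU : ∑ e' : EdgeK n, U' e'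
      ≤ 2 * (G.card : ℝ) * ((G.card : ℝ) - 1) * c * rb ^ (G.card - 2) := by
    have h1 : ∑ e' : EdgeK n, U' e' = ∑ e' ∈ univ.erase e, (U e' : ℝ) := by
      rw [← Finset.sum_erase_add univ _ (mem_univ e)]
      have h0 : U' e = 0 := by rw [hU'app, if_pos rfl]
      rw [h0, add_zero]
      exact Finset.sum_congr rfl fun e' he' => by
        rw [hU'app, if_neg (Finset.ne_of_mem_erase he')]
    rw [h1, ← Nat.cast_sum]
    calc ((∑ e' ∈ univ.erase e, U e' : ℕ) : ℝ)
        ≤ ((∑ b ∈ G, rootedCount X (G.erase b) e : ℕ) : ℝ) := by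
          exact_mod_cast upper_bound X G e hGne
      _ = ∑ b ∈ G, (rootedCount X (G.erase b) e : ℝ) := Nat.cast_sum _ _
      _ ≤ ∑ _b ∈ G, 2 * ((G.card : ℝ) - 1) * c * rb ^ (G.card - 2) :=
          Finset.sum_le_sum fun b hb => erase_bound X G e b hm h2 hb hn1
      _ = 2 * (G.card : ℝ) * ((G.card : ℝ) - 1) * c * rb ^ (G.card - 2) := by
          rw [Finset.sum_const, nsmul_eq_mul]
          ring
  have hS1 : ∑ e' : EdgeK n, p e' * U' e'
      ≤ Φ * (2 * (G.card : ℝ) * ((G.card : ℝ) - 1) * c * rb ^ (G.card - 2)) := by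
    calc ∑ e' : EdgeK n, p e' * U' e' ≤ ∑ e' : EdgeK n, Φ * U' e' :=
          Finset.sum_le_sum fun e' _ => mul_le_mul_of_nonneg_right (hpΦ e') (hU'0 e')
      _ = Φ * ∑ e' : EdgeK n, U' e' := by rw [Finset.mul_sum]
      _ ≤ _ := mul_le_mul_of_nonneg_left hsumU hΦ0
  -- Lower bound for the negative part
  have hS2 : ((G.card : ℝ) - 1) * (N0 : ℝ)
      ≤ ∑ e' : EdgeK n, (if X e' = true then U' e' else 0) := by
    have hA : ∀ e' ∈ univ.filter (fun e' : EdgeK n => X e' = true ∧ e' ≠ e),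
        (((rSetF X G e).filter fun v => ∃ b ∈ G, mapEdge v b = e').card : ℝ)
          = (if X e' = true then U' e' else 0) := by
      intro e' he'
      obtain ⟨_, hXe', hee⟩ := mem_filter.mp he'
      rw [if_pos hXe', hU'app, if_neg hee, hUapp]
      congr 2
      rw [setEdge_self hXe']
    calc ((G.card : ℝ) - 1) * (N0 : ℝ)
        = (((G.card - 1) * N0 : ℕ) : ℝ) := by
          rw [Nat.cast_mul, Nat.cast_sub (by omega)]
          norm_num
      _ ≤ ((∑ e' ∈ univ.filter (fun e' : EdgeK n => X e' = true ∧ e' ≠ e),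
            ((rSetF X G e).filter fun v => ∃ b ∈ G, mapEdge v b = e').card : ℕ) : ℝ) := by
          exact_mod_cast lower_bound X G e
      _ = ∑ e' ∈ univ.filter (fun e' : EdgeK n => X e' = true ∧ e' ≠ e),
            (((rSetF X G e).filter fun v => ∃ b ∈ G, mapEdge v b = e').card : ℝ) :=
          Nat.cast_sum _ _
      _ = ∑ e' ∈ univ.filter (fun e' : EdgeK n => X e' = true ∧ e' ≠ e),
            (if X e' = true then U' e' else 0) := Finset.sum_congr rfl hA
      _ ≤ ∑ e' : EdgeK n, (if X e' = true then U' e' else 0) := by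
          apply Finset.sum_le_sum_of_subset_of_nonneg (Finset.filter_subset _ _)
          intro e' _ _
          split
          · exact hU'0 e'
          · exact le_refl 0
  -- Put everything together
  have hmain : ((n.choose 2 : ℝ))⁻¹ *
      ((∑ e' : EdgeK n, p e' * U' e' - ∑ e' : EdgeK n, (if X e' = true then U' e' else 0)) / c)
      ≤ 2 / (n.choose 2 : ℝ) * (G.card : ℝ) * ((G.card : ℝ) - 1) *
          (-(rG X G e ^ (G.card - 1)) + Φ * rb ^ (G.card - 2)) := by
    calc ((n.choose 2 : ℝ))⁻¹ *
        ((∑ e' : EdgeK n, p e' * U' e' - ∑ e' : EdgeK n, (if X e' = true then U' e' else 0)) / c)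
        ≤ ((n.choose 2 : ℝ))⁻¹ *
          ((Φ * (2 * (G.card : ℝ) * ((G.card : ℝ) - 1) * c * rb ^ (G.card - 2))
            - ((G.card : ℝ) - 1) * (N0 : ℝ)) / c) := by
          apply mul_le_mul_of_nonneg_left ?_ (inv_nonneg.mpr hM.le)
          apply div_le_div_of_nonneg_right ?_ hc.le
          exact sub_le_sub hS1 hS2
      _ = 2 / (n.choose 2 : ℝ) * (G.card : ℝ) * ((G.card : ℝ) - 1) *
          (-(rG X G e ^ (G.card - 1)) + Φ * rb ^ (G.card - 2)) := by
          rw [rG_pow X G e h2, ← hN0, ← hcdef]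
          have hk : ((G.card : ℝ)) ≠ 0 := by
            have : (2:ℝ) ≤ (G.card : ℝ) := by exact_mod_cast h2
            linarith
          have hcne : c ≠ 0 := ne_of_gt hc
          have hMne : ((n.choose 2 : ℝ)) ≠ 0 := ne_of_gt hM
          clear_value c rb Φ N0
          field_simp
          ring
  refine le_trans hmain ?_
  have hpos : 0 < ε / (n : ℝ) ^ 2 := by
    apply div_pos hε
    have : (0:ℝ) < (n : ℝ) := by exact_mod_cast (by omega : 0 < n)
    positivity
  linarith
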